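/- Let G be a closed subgroup of O(n). Every G-invariant convex body is origin-symmetric if and only if for every x in R^n, -x belongs to the orbit Gx. -/

import Mathlib

open scoped RealInnerProductSpace Pointwise

/-- The action of an orthogonal matrix on Euclidean space. -/
noncomputable def act {n : ℕ} (g : Matrix.orthogonalGroup (Fin n) ℝ)
    (x : EuclideanSpace ℝ (Fin n)) : EuclideanSpace ℝ (Fin n) :=
  Matrix.toEuclideanLin (g : Matrix (Fin n) (Fin n) ℝ) x

namespace Stmt6Aux
open Matrix

variable {n : ℕ}

lemma act_one (x : EuclideanSpace ℝ (Fin n)) : act 1 x = x := by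
  simp [act, Matrix.toEuclideanLin_apply]

lemma act_mul (g h : Matrix.orthogonalGroup (Fin n) ℝ) (x : EuclideanSpace ℝ (Fin n)) :
    act (g * h) x = act g (act h x) := by
  simp [act, Matrix.toEuclideanLin_apply, Matrix.mulVec_mulVec]

lemma act_inner (g : Matrix.orthogonalGroup (Fin n) ℝ) (y z : EuclideanSpace ℝ (Fin n)) :
    ⟪act g y, act g z⟫ = ⟪y, z⟫ := by
  have hg : (g : Matrix (Fin n) (Fin n) ℝ)ᵀ * (g : Matrix (Fin n) (Fin n) ℝ) = 1 := by
    have := (Unitary.mem_iff.mp g.2).1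
    rwa [Matrix.star_eq_conjTranspose, Matrix.conjTranspose_eq_transpose_of_trivial] at this
  simp only [act, Matrix.toEuclideanLin_apply, EuclideanSpace.inner_eq_star_dotProduct,
    star_trivial, Equiv.apply_symm_apply]
  rw [Matrix.dotProduct_mulVec, Matrix.vecMul_mulVec, hg, Matrix.vecMul_one]


lemma act_norm (g : Matrix.orthogonalGroup (Fin n) ℝ) (y : EuclideanSpace ℝ (Fin n)) :
    ‖act g y‖ = ‖y‖ := by
  have h := act_inner g y y
  rw [real_inner_self_eq_norm_mul_norm, real_inner_self_eq_norm_mul_norm] at h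
  nlinarith [norm_nonneg (act g y), norm_nonneg y]



lemma act_continuous (g : Matrix.orthogonalGroup (Fin n) ℝ) : Continuous (act g) :=
  LinearMap.continuous_of_finiteDimensional (Matrix.toEuclideanLin (g : Matrix (Fin n) (Fin n) ℝ))

/-- `act g` as a homeomorphism. -/
noncomputable def actHomeo (g : Matrix.orthogonalGroup (Fin n) ℝ) :
    EuclideanSpace ℝ (Fin n) ≃ₜ EuclideanSpace ℝ (Fin n) where
  toFun := act g
  invFun := act g⁻¹
  left_inv y := by rw [← act_mul, inv_mul_cancel, act_one]
  right_inv y := by rw [← act_mul, mul_inv_cancel, act_one]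
  continuous_toFun := act_continuous g
  continuous_invFun := act_continuous g⁻¹

lemma act_image_closedBall (g : Matrix.orthogonalGroup (Fin n) ℝ) (r : ℝ) :
    act g '' Metric.closedBall 0 r = Metric.closedBall 0 r := by
  ext y
  simp only [Set.mem_image, Metric.mem_closedBall, dist_zero_right]
  constructor
  · rintro ⟨z, hz, rfl⟩; rwa [act_norm]
  · intro hy
    refine ⟨act g⁻¹ y, ?_, by rw [← act_mul, mul_inv_cancel, act_one]⟩
    rwa [act_norm]

lemma isCompact_orthSet :
    IsCompact {A : Matrix (Fin n) (Fin n) ℝ | A ∈ Matrix.orthogonalGroup (Fin n) ℝ} := by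
  have hbox : IsCompact (Set.pi Set.univ fun _ : Fin n =>
      Set.pi Set.univ fun _ : Fin n => Set.Icc (-1 : ℝ) 1) :=
    isCompact_univ_pi fun _ => isCompact_univ_pi fun _ => isCompact_Icc
  refine hbox.of_isClosed_subset ?_ ?_
  · have : {A : Matrix (Fin n) (Fin n) ℝ | A ∈ Matrix.orthogonalGroup (Fin n) ℝ}
        = (fun A : Matrix (Fin n) (Fin n) ℝ => A * star A) ⁻¹' {1} := by
      ext A
      simp [Matrix.mem_orthogonalGroup_iff, Set.mem_preimage, Matrix.star_eq_conjTranspose,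
        Matrix.conjTranspose_eq_transpose_of_trivial]
    rw [this]
    exact IsClosed.preimage (continuous_id.matrix_mul continuous_star) isClosed_singleton
  · intro A hA
    refine Set.mem_univ_pi.mpr fun i => Set.mem_univ_pi.mpr fun j => ?_
    have h := entry_norm_bound_of_unitary (𝕜 := ℝ) hA i j
    rw [Real.norm_eq_abs] at h
    exact Set.mem_Icc.mpr (abs_le.mp h)

instance : CompactSpace (Matrix.orthogonalGroup (Fin n) ℝ) :=
  isCompact_iff_compactSpace.mp isCompact_orthSet

lemma continuous_act_apply (x : EuclideanSpace ℝ (Fin n)) :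
    Continuous fun g : Matrix.orthogonalGroup (Fin n) ℝ => act g x := by
  have := LinearMap.continuous_of_finiteDimensional
    ({ toFun := fun A : Matrix (Fin n) (Fin n) ℝ => Matrix.toEuclideanLin A x
       map_add' := fun A B => by simp
       map_smul' := fun c A => by simp } : Matrix (Fin n) (Fin n) ℝ →ₗ[ℝ] EuclideanSpace ℝ (Fin n))
  exact this.comp continuous_subtype_val

end Stmt6Aux

open Stmt6Aux

/-- For a closed subgroup G of O(n): every G-invariant convex body is
origin-symmetric iff -x belongs to the orbit Gx for every x. -/
theorem stmt6 {n : ℕ} (G : Subgroup (Matrix.orthogonalGroup (Fin n) ℝ))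
    (hGcl : IsClosed (G : Set (Matrix.orthogonalGroup (Fin n) ℝ))) :
    (∀ K : Set (EuclideanSpace ℝ (Fin n)), IsCompact K → Convex ℝ K →
        (interior K).Nonempty → (∀ g ∈ G, act g '' K = K) → K = -K) ↔
    (∀ x : EuclideanSpace ℝ (Fin n), ∃ g ∈ G, act g x = -x) := by
  constructor
  · intro hbody x
    by_contra hx
    push_neg at hx
    have hx0 : x ≠ 0 := by
      rintro rfl
      exact hx 1 G.one_mem (by simp [act_one])
    have hxn : 0 < ‖x‖ := norm_pos_iff.mpr hx0
    set r : ℝ := ‖x‖ / 2 with hr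
    have hr0 : 0 < r := by positivity
    set Orb : Set (EuclideanSpace ℝ (Fin n)) :=
      (fun g : Matrix.orthogonalGroup (Fin n) ℝ => act g x) '' (G : Set _) with hOrbdef
    set S : Set (EuclideanSpace ℝ (Fin n)) :=
      Metric.closedBall (0 : EuclideanSpace ℝ (Fin n)) r ∪ Orb with hSdef
    set K : Set (EuclideanSpace ℝ (Fin n)) := closure (convexHull ℝ S) with hKdef
    have hxOrb : x ∈ Orb := ⟨1, G.one_mem, act_one x⟩
    have hOrbnorm : ∀ y ∈ Orb, ‖y‖ = ‖x‖ := by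
      rintro y ⟨g, hg, rfl⟩; exact act_norm g x
    have hOrbcomp : IsCompact Orb :=
      (hGcl.isCompact).image (continuous_act_apply x)
    have hSsub : S ⊆ Metric.closedBall 0 ‖x‖ := by
      rintro y (hy | hy)
      · rw [Metric.mem_closedBall, dist_zero_right]
        have := Metric.mem_closedBall.mp hy
        rw [dist_zero_right] at this
        linarith
      · rw [Metric.mem_closedBall, dist_zero_right, hOrbnorm y hy]
    have hKsub : K ⊆ Metric.closedBall 0 ‖x‖ :=
      closure_minimal (convexHull_min hSsub (convex_closedBall _ _)) Metric.isClosed_closedBall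
    have hKcomp : IsCompact K :=
      (isCompact_closedBall (0 : EuclideanSpace ℝ (Fin n)) ‖x‖).of_isClosed_subset
        isClosed_closure hKsub
    have hKconv : Convex ℝ K := (convex_convexHull ℝ S).closure
    have hballK : Metric.closedBall (0 : EuclideanSpace ℝ (Fin n)) r ⊆ K :=
      (Set.subset_union_left.trans (subset_convexHull ℝ S)).trans subset_closure
    have hKint : (interior K).Nonempty := by
      refine ⟨0, ?_⟩
      have : Metric.ball (0 : EuclideanSpace ℝ (Fin n)) r ⊆ interior K :=
        (Metric.isOpen_ball.subset_interior_iff).mpr (Metric.ball_subset_closedBall.trans hballK)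
      exact this (Metric.mem_ball_self hr0)
    have hSinv : ∀ g ∈ G, act g '' S = S := by
      intro g hg
      rw [hSdef, Set.image_union, act_image_closedBall]
      congr 1
      ext y
      constructor
      · rintro ⟨z, ⟨h, hh, rfl⟩, rfl⟩
        exact ⟨g * h, G.mul_mem hg hh, by simpa using act_mul g h x⟩
      · rintro ⟨h, hh, rfl⟩
        refine ⟨act (g⁻¹ * h) x, ⟨g⁻¹ * h, G.mul_mem (G.inv_mem hg) hh, rfl⟩, ?_⟩
        rw [← act_mul, ← mul_assoc, mul_inv_cancel, one_mul]
    have hKinv : ∀ g ∈ G, act g '' K = K := by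
      intro g hg
      have h1 : act g '' K = closure (act g '' convexHull ℝ S) :=
        (actHomeo g).image_closure (convexHull ℝ S)
      have h2 : act g '' convexHull ℝ S = convexHull ℝ (act g '' S) :=
        (Matrix.toEuclideanLin ((g : Matrix (Fin n) (Fin n) ℝ))).image_convexHull S
      rw [h1, h2, hSinv g hg]
    have hsym := hbody K hKcomp hKconv hKint hKinv
    have hxK : x ∈ K := subset_closure (subset_convexHull ℝ S (Or.inr hxOrb))
    have hnegK : -x ∈ K := by
      rw [hsym]; exact Set.neg_mem_neg.mpr hxK
    -- separating functional
    obtain ⟨y₀, hy₀Orb, hy₀max⟩ := hOrbcomp.exists_isMaxOn ⟨x, hxOrb⟩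
      ((continuous_const.inner continuous_id).continuousOn :
        ContinuousOn (fun y => (inner ℝ (-x) y : ℝ)) Orb)
    rw [isMaxOn_iff] at hy₀max
    have hy₀ne : y₀ ≠ -x := by
      rintro rfl
      obtain ⟨g, hg, hgx⟩ := hy₀Orb
      exact hx g hg hgx
    have hy₀lt : (inner ℝ (-x) y₀ : ℝ) < ‖x‖ * ‖x‖ := by
      have h1 : (inner ℝ (-x) y₀ : ℝ) < ‖-x‖ * ‖y₀‖ := by
        rw [inner_lt_norm_mul_iff_real]
        intro hcontra
        rw [norm_neg, hOrbnorm y₀ hy₀Orb] at hcontra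
        exact hy₀ne (smul_right_injective _ (ne_of_gt hxn) hcontra.symm)
      rwa [norm_neg, hOrbnorm y₀ hy₀Orb] at h1
    set c : ℝ := max (‖x‖ * r) (inner ℝ (-x) y₀ : ℝ) with hc
    have hclt : c < ‖x‖ * ‖x‖ := by
      refine max_lt ?_ hy₀lt
      have : r < ‖x‖ := by rw [hr]; linarith
      exact mul_lt_mul_of_pos_left this hxn
    have hSH : S ⊆ {y : EuclideanSpace ℝ (Fin n) | (inner ℝ (-x) y : ℝ) ≤ c} := by
      rintro y (hy | hy)
      · have h1 : (inner ℝ (-x) y : ℝ) ≤ ‖-x‖ * ‖y‖ := real_inner_le_norm _ _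
        have h2 : ‖y‖ ≤ r := by
          have := Metric.mem_closedBall.mp hy; rwa [dist_zero_right] at this
        refine le_trans h1 (le_trans ?_ (le_max_left _ _))
        rw [norm_neg]
        exact mul_le_mul_of_nonneg_left h2 (norm_nonneg x)
      · exact le_trans (hy₀max y hy) (le_max_right _ _)
    have hH : Convex ℝ {y : EuclideanSpace ℝ (Fin n) | (inner ℝ (-x) y : ℝ) ≤ c} :=
      convex_halfSpace_le
        ⟨fun a b => inner_add_right _ _ _, fun t a => real_inner_smul_right _ _ _⟩ c
    have hHcl : IsClosed {y : EuclideanSpace ℝ (Fin n) | (inner ℝ (-x) y : ℝ) ≤ c} :=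
      isClosed_le (continuous_const.inner continuous_id) continuous_const
    have hKH : K ⊆ {y : EuclideanSpace ℝ (Fin n) | (inner ℝ (-x) y : ℝ) ≤ c} :=
      closure_minimal (convexHull_min hSH hH) hHcl
    have hfin : (inner ℝ (-x) (-x) : ℝ) ≤ c := hKH hnegK
    rw [real_inner_self_eq_norm_mul_norm, norm_neg] at hfin
    linarith
  · intro horb K hKc hKconv hKint hKinv
    have key : ∀ z ∈ K, -z ∈ K := by
      intro z hz
      obtain ⟨g, hg, hgz⟩ := horb z
      rw [← hgz, ← hKinv g hg]
      exact ⟨z, hz, rfl⟩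
    ext y
    constructor
    · intro hy
      exact Set.mem_neg.mpr (key y hy)
    · intro hy
      have := key (-y) (Set.mem_neg.mp hy)
      rwa [neg_neg] at this
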